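/- arXiv:2604.17499 — 2 statements merged into one kernel-verified Lean document; each statement's English description precedes it below -/
import Mathlib

section
/- Let q > 2 be a real number. Then there exists a constant C > 0, depending only on q, such that for every U > 0 and every w ∈ ℝ one has ||U + w|^q − U^q − q·U^{q−1}·w − (q(q−1)/2)·U^{q−2}·w²| ≤ C·(|w|^q + U^{(q−3)₊}·|w|^{q−(q−3)₊}), where (q−3)₊ = max(q−3, 0). -/
open Real Set

lemma mvt_step {h h' : ℝ → ℝ} {c M : ℝ}
    (hd : ∀ s ∈ Icc (-c) c, HasDerivAt h (h' s) s)
    (hb : ∀ s ∈ Icc (-c) c, |h' s| ≤ M)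
    (h0 : h 0 = 0) {w : ℝ} (hw : |w| ≤ c) :
    |h w| ≤ M * |w| := by
  have hc : 0 ≤ c := le_trans (abs_nonneg w) hw
  have h0m : (0:ℝ) ∈ Icc (-c) c := ⟨by linarith, hc⟩
  have hwm : w ∈ Icc (-c) c := ⟨neg_le_of_abs_le hw, le_of_abs_le hw⟩
  have := Convex.norm_image_sub_le_of_norm_hasDerivWithin_le
    (fun x hx => (hd x hx).hasDerivWithinAt) hb (convex_Icc _ _) h0m hwm
  simpa [h0, Real.norm_eq_abs] using this

lemma hasDerivAt_shift_rpow (U p : ℝ) {s : ℝ} (h : 0 < U + s) :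
    HasDerivAt (fun x => (U + x) ^ p) (p * (U + s) ^ (p - 1)) s := by
  have h1 : HasDerivAt (fun x : ℝ => U + x) 1 s := (hasDerivAt_id s).const_add U
  have h2 := (Real.hasDerivAt_rpow_const (p := p) (Or.inl h.ne')).comp s h1
  simpa [Function.comp_def] using h2

lemma near_bound (q : ℝ) (hq : 2 < q) (U w : ℝ) (hU : 0 < U) (hw : |w| ≤ U / 2) :
    |(U + w) ^ q - U ^ q - q * U ^ (q - 1) * w -
        q * (q - 1) / 2 * U ^ (q - 2) * w ^ 2| ≤
      q * (q - 1) * (q - 2) * ((3/2) ^ (q-3) + (1/2) ^ (q-3)) * U ^ (q - 3) * |w| ^ 3 := by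
  have hq1 : (0:ℝ) < q - 1 := by linarith
  have hq2 : (0:ℝ) < q - 2 := by linarith
  have hU3 : (0:ℝ) ≤ U ^ (q-3) := (Real.rpow_pos_of_pos hU _).le
  have hKpos : (0:ℝ) < (3/2 : ℝ) ^ (q-3) + (1/2 : ℝ) ^ (q-3) := by positivity
  set K : ℝ := (3/2 : ℝ) ^ (q-3) + (1/2 : ℝ) ^ (q-3) with hK
  set B : ℝ := (q - 2) * K * U ^ (q - 3) with hB
  have hBpos : 0 ≤ B := by positivity
  have hpos : ∀ s : ℝ, s ∈ Icc (-|w|) |w| → 0 < U + s := by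
    intro s hs
    have h1 := hs.1; have h2 := neg_le_of_abs_le hw
    linarith
  have hpow : ∀ s : ℝ, s ∈ Icc (-|w|) |w| → (U + s) ^ (q-3) ≤ K * U ^ (q-3) := by
    intro s hs
    have h1 : U / 2 ≤ U + s := by
      have := hs.1; have := neg_le_of_abs_le hw; linarith
    have h2 : U + s ≤ 3 * U / 2 := by
      have := hs.2; have := le_of_abs_le hw; linarith
    have hUs : 0 < U + s := hpos s hs
    rw [hK, add_mul]
    rcases le_or_gt 0 (q - 3) with h3 | h3
    · have hle : (U + s) ^ (q-3) ≤ (3 * U / 2) ^ (q-3) :=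
        Real.rpow_le_rpow hUs.le h2 h3
      have heq : (3 * U / 2 : ℝ) ^ (q-3) = (3/2 : ℝ) ^ (q-3) * U ^ (q-3) := by
        rw [show (3 * U / 2 : ℝ) = (3/2) * U by ring,
          Real.mul_rpow (by norm_num) hU.le]
      have h4 : (0:ℝ) ≤ (1/2 : ℝ) ^ (q-3) * U ^ (q-3) := by positivity
      linarith [heq ▸ hle]
    · have hle : (U + s) ^ (q-3) ≤ (U / 2) ^ (q-3) :=
        Real.rpow_le_rpow_of_nonpos (by positivity) h1 h3.le
      have heq : (U / 2 : ℝ) ^ (q-3) = (1/2 : ℝ) ^ (q-3) * U ^ (q-3) := by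
        rw [show (U / 2 : ℝ) = (1/2) * U by ring,
          Real.mul_rpow (by norm_num) hU.le]
      have h4 : (0:ℝ) ≤ (3/2 : ℝ) ^ (q-3) * U ^ (q-3) := by positivity
      linarith [heq ▸ hle]
  have hH : ∀ s ∈ Icc (-|w|) |w|, |(U + s) ^ (q-2) - U ^ (q-2)| ≤ B * |w| := by
    intro s hs
    have habs : |s| ≤ |w| := abs_le.mpr ⟨hs.1, hs.2⟩
    have hstep := mvt_step (h := fun x => (U + x) ^ (q-2) - U ^ (q-2))
      (h' := fun x => (q-2) * (U + x) ^ (q-3)) (c := |w|) (M := B)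
      (fun x hx => by
        have := (hasDerivAt_shift_rpow U (q-2) (hpos x hx)).sub_const (U ^ (q-2))
        simpa [show q - 2 - 1 = q - 3 by ring] using this)
      (fun x hx => by
        have h1 := hpow x hx
        have h2 : (0:ℝ) ≤ (U + x) ^ (q-3) := (Real.rpow_pos_of_pos (hpos x hx) _).le
        rw [abs_mul, abs_of_pos hq2, abs_of_nonneg h2, hB]
        nlinarith)
      (by simp) habs
    calc |(U + s) ^ (q-2) - U ^ (q-2)| ≤ B * |s| := hstep
      _ ≤ B * |w| := by nlinarith [abs_nonneg s]
  have hG' : ∀ s ∈ Icc (-|w|) |w|,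
      |q * (U + s) ^ (q-1) - q * U ^ (q-1) - q * (q-1) * U ^ (q-2) * s| ≤
        q * (q-1) * B * |w| * |s| := by
    intro s hs
    have habs : |s| ≤ |w| := abs_le.mpr ⟨hs.1, hs.2⟩
    refine mvt_step (M := q * (q-1) * B * |w|)
      (h := fun x => q * (U + x) ^ (q-1) - q * U ^ (q-1) - q * (q-1) * U ^ (q-2) * x)
      (h' := fun x => q * (q-1) * ((U + x) ^ (q-2) - U ^ (q-2)))
      (fun x hx => ?_)
      (fun x hx => by
        have := hH x hx
        rw [abs_mul, abs_of_pos (by positivity : (0:ℝ) < q * (q-1))]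
        nlinarith [mul_le_mul_of_nonneg_left this
          (show (0:ℝ) ≤ q * (q-1) by positivity)])
      (by norm_num) habs
    have h1 := ((hasDerivAt_shift_rpow U (q-1) (hpos x hx)).const_mul q).sub
      (((hasDerivAt_id x).const_mul (q * (q-1) * U ^ (q-2))).const_add (q * U ^ (q-1)))
    have h2 : q * (q-1) * ((U + x) ^ (q-2) - U ^ (q-2))
        = q * ((q-1) * (U + x) ^ (q-1-1)) - q * (q-1) * U ^ (q-2) * 1 := by
      rw [show q-1-1 = q-2 by ring]; ring
    show HasDerivAt _ (q * (q-1) * ((U + x) ^ (q-2) - U ^ (q-2))) x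
    rw [h2]
    exact h1.congr_of_eventuallyEq
      (Filter.Eventually.of_forall (fun y => by simp only [id_eq, Pi.sub_apply]; ring))
  have hG : |(U + w) ^ q - U ^ q - q * U ^ (q-1) * w -
      q * (q-1) / 2 * U ^ (q-2) * w ^ 2| ≤ q * (q-1) * B * |w| * |w| * |w| := by
    have hstep := mvt_step (c := |w|) (M := q * (q-1) * B * |w| * |w|)
      (h := fun x => (U + x) ^ q - U ^ q - q * U ^ (q-1) * x -
        q * (q-1) / 2 * U ^ (q-2) * x ^ 2)
      (h' := fun x => q * (U + x) ^ (q-1) - q * U ^ (q-1) - q * (q-1) * U ^ (q-2) * x)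
      (fun x hx => ?_)
      (fun x hx => by
        have h1 := hG' x hx
        have h2 : |x| ≤ |w| := abs_le.mpr ⟨hx.1, hx.2⟩
        nlinarith [mul_le_mul_of_nonneg_left h2
          (show (0:ℝ) ≤ q * (q-1) * B * |w| by positivity)])
      (by simp) le_rfl
    · linarith [hstep]
    · have hd1 := hasDerivAt_shift_rpow U q (hpos x hx)
      have hd2 : HasDerivAt (fun y : ℝ => q * U ^ (q-1) * y) (q * U ^ (q-1)) x := by
        simpa using (hasDerivAt_id x).const_mul (q * U ^ (q-1))
      have hd3 : HasDerivAt (fun y : ℝ => q * (q-1) / 2 * U ^ (q-2) * y ^ 2)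
          (q * (q-1) / 2 * U ^ (q-2) * (2 * x)) x := by
        simpa using ((hasDerivAt_pow 2 x).const_mul (q * (q-1) / 2 * U ^ (q-2)))
      have := ((hd1.sub_const (U ^ q)).sub hd2).sub hd3
      exact this.congr_deriv (by ring)
  calc |(U + w) ^ q - U ^ q - q * U ^ (q-1) * w - q * (q-1) / 2 * U ^ (q-2) * w ^ 2|
      ≤ q * (q-1) * B * |w| * |w| * |w| := hG
    _ = q * (q-1) * (q-2) * K * U ^ (q-3) * |w| ^ 3 := by rw [hB]; ring

lemma two_mul_abs_rpow {U w p : ℝ} (hU : 0 ≤ U) (h : U ≤ 2 * |w|) (hp : 0 ≤ p) :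
    U ^ p ≤ 2 ^ p * |w| ^ p := by
  calc U ^ p ≤ (2 * |w|) ^ p := Real.rpow_le_rpow hU h hp
    _ = 2 ^ p * |w| ^ p := Real.mul_rpow (by norm_num) (abs_nonneg w)

theorem taylor_second_order_rpow (q : ℝ) (hq : 2 < q) :
    ∃ C > 0, ∀ U w : ℝ, 0 < U →
      abs (|U + w| ^ q - U ^ q - q * U ^ (q - 1) * w -
          q * (q - 1) / 2 * U ^ (q - 2) * w ^ 2) ≤
        C * (|w| ^ q + U ^ max (q - 3) 0 * |w| ^ (q - max (q - 3) 0)) := by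
  have hq1 : (0:ℝ) < q - 1 := by linarith
  have hq2 : (0:ℝ) < q - 2 := by linarith
  set K : ℝ := (3/2 : ℝ) ^ (q-3) + (1/2 : ℝ) ^ (q-3) with hK
  have hKpos : 0 < K := by positivity
  set D : ℝ := q * (q-1) * (q-2) * K with hD
  have hDpos : 0 < D := by positivity
  set E : ℝ := 3 ^ q + 2 ^ q + q * 2 ^ (q-1) + q * (q-1) / 2 * 2 ^ (q-2) with hE
  have hEpos : 0 < E := by positivity
  refine ⟨D + E, by positivity, fun U w hU => ?_⟩
  clear_value K D E
  set m : ℝ := max (q - 3) 0 with hm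
  clear_value m
  have hT1 : 0 ≤ |w| ^ q := Real.rpow_nonneg (abs_nonneg w) q
  have hT2 : 0 ≤ U ^ m * |w| ^ (q - m) := by positivity
  rcases le_or_gt |w| (U/2) with hcase | hcase
  · -- near field
    have hUw : 0 < U + w := by
      have := neg_le_of_abs_le hcase; linarith
    rw [abs_of_pos hUw]
    have hnear := near_bound q hq U w hU hcase
    rw [← hK] at hnear
    have hmain : |(U + w) ^ q - U ^ q - q * U ^ (q-1) * w -
        q * (q-1) / 2 * U ^ (q-2) * w ^ 2| ≤ D * (U ^ (q-3) * |w| ^ 3) := by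
      calc _ ≤ q * (q-1) * (q-2) * K * U ^ (q-3) * |w| ^ 3 := hnear
        _ = D * (U ^ (q-3) * |w| ^ 3) := by rw [hD]; ring
    have hkey : U ^ (q-3) * |w| ^ 3 ≤ |w| ^ q + U ^ m * |w| ^ (q - m) := by
      rcases le_or_gt 3 q with h3 | h3
      · have hm3 : m = q - 3 := by rw [hm]; exact max_eq_left (by linarith)
        have : U ^ m * |w| ^ (q - m) = U ^ (q-3) * |w| ^ 3 := by
          rw [hm3, show q - (q - 3) = (3:ℝ) by ring,
            show ((3:ℝ) : ℝ) = ((3:ℕ) : ℝ) by norm_num, Real.rpow_natCast]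
        linarith
      · have hm0 : m = 0 := by rw [hm]; exact max_eq_right (by linarith)
        rcases eq_or_ne w 0 with hw0 | hw0
        · simp [hw0]
          positivity
        · have hwpos : 0 < |w| := abs_pos.mpr hw0
          have hUle : U ^ (q-3) ≤ |w| ^ (q-3) := by
            calc U ^ (q-3) ≤ (2 * |w|) ^ (q-3) :=
                Real.rpow_le_rpow_of_nonpos (by positivity) (by linarith) (by linarith)
              _ = 2 ^ (q-3) * |w| ^ (q-3) := Real.mul_rpow (by norm_num) (abs_nonneg w)
              _ ≤ 1 * |w| ^ (q-3) := by
                have : (2:ℝ) ^ (q-3) ≤ 1 :=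
                  Real.rpow_le_one_of_one_le_of_nonpos (by norm_num) (by linarith)
                have := Real.rpow_nonneg (abs_nonneg w) (q-3)
                nlinarith
              _ = |w| ^ (q-3) := one_mul _
          have heq : |w| ^ (q-3) * |w| ^ 3 = |w| ^ q := by
            rw [show (|w| : ℝ) ^ (3:ℕ) = |w| ^ ((3:ℕ) : ℝ) from (Real.rpow_natCast _ _).symm,
              ← Real.rpow_add hwpos]
            norm_num
          have h1 : U ^ (q-3) * |w| ^ 3 ≤ |w| ^ (q-3) * |w| ^ 3 := by
            have : (0:ℝ) ≤ |w| ^ 3 := by positivity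
            nlinarith
          rw [hm0, Real.rpow_zero, one_mul, sub_zero]
          linarith [heq ▸ h1]
    calc _ ≤ D * (U ^ (q-3) * |w| ^ 3) := hmain
      _ ≤ D * (|w| ^ q + U ^ m * |w| ^ (q - m)) := by
        exact mul_le_mul_of_nonneg_left hkey hDpos.le
      _ ≤ (D + E) * (|w| ^ q + U ^ m * |w| ^ (q - m)) := by
          linarith [mul_nonneg hEpos.le (add_nonneg hT1 hT2)]
  · -- far field
    have hwpos : 0 < |w| := lt_trans (by positivity) hcase
    have hU2w : U ≤ 2 * |w| := by linarith
    have habs1 : |U + w| ≤ 3 * |w| := by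
      calc |U + w| ≤ |U| + |w| := abs_add_le _ _
        _ = U + |w| := by rw [abs_of_pos hU]
        _ ≤ 3 * |w| := by linarith
    have hb1 : |U + w| ^ q ≤ 3 ^ q * |w| ^ q := by
      calc |U + w| ^ q ≤ (3 * |w|) ^ q := Real.rpow_le_rpow (abs_nonneg _) habs1 (by linarith)
        _ = 3 ^ q * |w| ^ q := Real.mul_rpow (by norm_num) (abs_nonneg w)
    have hb2 : U ^ q ≤ 2 ^ q * |w| ^ q := two_mul_abs_rpow hU.le hU2w (by linarith)
    have hq1' : |w| ^ (q-1) * |w| = |w| ^ q := by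
      rw [← Real.rpow_add_one (ne_of_gt hwpos)]; norm_num
    have hq2' : |w| ^ (q-2) * w ^ 2 = |w| ^ q := by
      rw [show w ^ 2 = |w| ^ 2 by rw [sq_abs],
        show (|w| : ℝ) ^ (2:ℕ) = |w| ^ ((2:ℕ) : ℝ) from (Real.rpow_natCast _ _).symm,
        ← Real.rpow_add hwpos]
      norm_num
    have hb3 : q * U ^ (q-1) * |w| ≤ q * 2 ^ (q-1) * |w| ^ q := by
      have h1 := two_mul_abs_rpow hU.le hU2w (by linarith : (0:ℝ) ≤ q - 1)
      calc q * U ^ (q-1) * |w| ≤ q * (2 ^ (q-1) * |w| ^ (q-1)) * |w| := by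
            gcongr
        _ = q * 2 ^ (q-1) * (|w| ^ (q-1) * |w|) := by ring
        _ = q * 2 ^ (q-1) * |w| ^ q := by rw [hq1']
    have hb4 : q * (q-1) / 2 * U ^ (q-2) * w ^ 2 ≤ q * (q-1) / 2 * 2 ^ (q-2) * |w| ^ q := by
      have h1 := two_mul_abs_rpow hU.le hU2w (by linarith : (0:ℝ) ≤ q - 2)
      have hw2 : (0:ℝ) ≤ w ^ 2 := sq_nonneg w
      calc q * (q-1) / 2 * U ^ (q-2) * w ^ 2
          ≤ q * (q-1) / 2 * (2 ^ (q-2) * |w| ^ (q-2)) * w ^ 2 := by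
            gcongr
        _ = q * (q-1) / 2 * 2 ^ (q-2) * (|w| ^ (q-2) * w ^ 2) := by ring
        _ = q * (q-1) / 2 * 2 ^ (q-2) * |w| ^ q := by rw [hq2']
    have htri : |(|U + w|) ^ q - U ^ q - q * U ^ (q-1) * w -
        q * (q-1) / 2 * U ^ (q-2) * w ^ 2| ≤
        |U + w| ^ q + U ^ q + q * U ^ (q-1) * |w| + q * (q-1) / 2 * U ^ (q-2) * w ^ 2 := by
      have e1 : (0:ℝ) ≤ |U + w| ^ q := Real.rpow_nonneg (abs_nonneg _) q
      have e2 : (0:ℝ) ≤ U ^ q := (Real.rpow_pos_of_pos hU q).le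
      have e3 : (0:ℝ) ≤ U ^ (q-1) := (Real.rpow_pos_of_pos hU _).le
      have e4 : (0:ℝ) ≤ U ^ (q-2) := (Real.rpow_pos_of_pos hU _).le
      have hw' : |q * U ^ (q-1) * w| = q * U ^ (q-1) * |w| := by
        rw [abs_mul, abs_of_nonneg (by positivity : (0:ℝ) ≤ q * U ^ (q-1))]
      calc _ ≤ |(|U + w|) ^ q - U ^ q - q * U ^ (q-1) * w| +
            |q * (q-1) / 2 * U ^ (q-2) * w ^ 2| := abs_sub _ _
        _ ≤ (|(|U + w|) ^ q - U ^ q| + |q * U ^ (q-1) * w|) +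
            |q * (q-1) / 2 * U ^ (q-2) * w ^ 2| := by
            gcongr; exact abs_sub _ _
        _ ≤ _ := by
            rw [hw', abs_of_nonneg (by positivity : (0:ℝ) ≤ q * (q-1) / 2 * U ^ (q-2) * w ^ 2)]
            have h5 : |(|U + w|) ^ q - U ^ q| ≤ |U + w| ^ q + U ^ q := by
              calc |(|U + w|) ^ q - U ^ q| ≤ |(|U + w|) ^ q| + |U ^ q| := abs_sub _ _
                _ = |U + w| ^ q + U ^ q := by rw [abs_of_nonneg e1, abs_of_nonneg e2]
            linarith
    calc _ ≤ |U + w| ^ q + U ^ q + q * U ^ (q-1) * |w| +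
          q * (q-1) / 2 * U ^ (q-2) * w ^ 2 := htri
      _ ≤ 3 ^ q * |w| ^ q + 2 ^ q * |w| ^ q + q * 2 ^ (q-1) * |w| ^ q +
            q * (q-1) / 2 * 2 ^ (q-2) * |w| ^ q :=
          add_le_add (add_le_add (add_le_add hb1 hb2) hb3) hb4
      _ = E * |w| ^ q := by rw [hE]; ring
      _ ≤ (D + E) * (|w| ^ q + U ^ m * |w| ^ (q - m)) := by
          linarith [mul_nonneg hDpos.le hT1,
            mul_nonneg (add_pos hDpos hEpos).le hT2]
end

section
/- Let n ≥ 5 be an integer. For every x ∈ ℝⁿ and every λ > 0, ∫_{ℝⁿ} U_{x,λ}(y)^{2n/(n−4)} dy = 𝒮₂^{n/4}, where 𝒮₂ = π²·n(n−4)(n²−4)·Γ(n/2)^{4/n}·Γ(n)^{−4/n}. -/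
open MeasureTheory

/-- The standard bubble `U_{x,λ}(y) = c_n (λ/(1+λ²‖y−x‖²))^{(n−4)/2}` with
`c_n = ((n−4)(n−2)n(n+2))^{(n−4)/8}`. -/
noncomputable def bubble (n : ℕ) (x : EuclideanSpace ℝ (Fin n)) (lam : ℝ)
    (y : EuclideanSpace ℝ (Fin n)) : ℝ :=
  (((n : ℝ) - 4) * ((n : ℝ) - 2) * (n : ℝ) * ((n : ℝ) + 2)) ^ (((n : ℝ) - 4) / 8) *
    (lam / (1 + lam ^ 2 * ‖y - x‖ ^ 2)) ^ (((n : ℝ) - 4) / 2)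

open Real Set intervalIntegral in
lemma real_beta {a b : ℝ} (ha : 0 < a) (hb : 0 < b) :
    ∫ x in (0:ℝ)..1, x ^ (a - 1) * (1 - x) ^ (b - 1)
      = Real.Gamma a * Real.Gamma b / Real.Gamma (a + b) := by
  have hab : 0 < Real.Gamma (a + b) := Real.Gamma_pos_of_pos (by linarith)
  have key : Complex.Gamma a * Complex.Gamma b
      = Complex.Gamma (a + b) * Complex.betaIntegral a b :=
    Complex.Gamma_mul_Gamma_eq_betaIntegral (by simpa using ha) (by simpa using hb)
  have hbeta : Complex.betaIntegral a b
      = ((∫ x in (0:ℝ)..1, x ^ (a - 1) * (1 - x) ^ (b - 1) : ℝ) : ℂ) := by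
    rw [Complex.betaIntegral, ← intervalIntegral.integral_ofReal]
    refine intervalIntegral.integral_congr fun x hx => ?_
    rw [uIcc_of_le zero_le_one] at hx
    push_cast
    rw [Complex.ofReal_cpow hx.1, Complex.ofReal_cpow (by linarith [hx.2] : (0:ℝ) ≤ 1 - x)]
    push_cast
    ring
  rw [hbeta, ← Complex.ofReal_add, Complex.Gamma_ofReal, Complex.Gamma_ofReal,
    Complex.Gamma_ofReal, ← Complex.ofReal_mul, ← Complex.ofReal_mul] at key
  have := Complex.ofReal_inj.mp key
  rw [this]
  field_simp

open Real Set in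
lemma beta_Ioi {a b : ℝ} (ha : 0 < a) (hb : 0 < b) :
    ∫ u in Ioi (0:ℝ), u ^ (a - 1) * (1 + u) ^ (-(a + b))
      = ∫ x in Ioo (0:ℝ) 1, x ^ (a - 1) * (1 - x) ^ (b - 1) := by
  have hderiv : ∀ x ∈ Ioo (0:ℝ) 1,
      HasDerivWithinAt (fun x : ℝ => x / (1 - x)) ((1 - x)^2)⁻¹ (Ioo 0 1) x := by
    intro x hx
    have h1 : (1 : ℝ) - x ≠ 0 := by nlinarith [hx.2]
    have : HasDerivAt (fun x : ℝ => x / (1 - x))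
        ((1 * (1 - x) - x * (0 - 1)) / (1 - x) ^ 2) x :=
      (hasDerivAt_id x).div ((hasDerivAt_const x 1).sub (hasDerivAt_id x)) h1
    refine this.hasDerivWithinAt.congr_deriv ?_
    ring
  have hinj : InjOn (fun x : ℝ => x / (1 - x)) (Ioo 0 1) := by
    intro x hx y hy h
    have h1 : (1 : ℝ) - x ≠ 0 := by nlinarith [hx.2]
    have h2 : (1 : ℝ) - y ≠ 0 := by nlinarith [hy.2]
    field_simp at h
    nlinarith [h]
  have himg : (fun x : ℝ => x / (1 - x)) '' Ioo 0 1 = Ioi 0 := by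
    ext u
    simp only [mem_image, mem_Ioo, mem_Ioi]
    constructor
    · rintro ⟨x, ⟨hx0, hx1⟩, rfl⟩
      exact div_pos hx0 (by linarith)
    · intro hu
      refine ⟨u / (1 + u), ⟨div_pos hu (by linarith), ?_⟩, ?_⟩
      · rw [div_lt_one (by linarith)]; linarith
      · have h1 : (1 : ℝ) + u ≠ 0 := by linarith
        field_simp
        ring
  have := integral_image_eq_integral_abs_deriv_smul measurableSet_Ioo hderiv hinj
      (fun u => u ^ (a - 1) * (1 + u) ^ (-(a + b)))
  rw [himg] at this
  rw [this]
  refine setIntegral_congr_fun measurableSet_Ioo fun x hx => ?_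
  have hx0 : (0:ℝ) < x := hx.1
  have hx1 : (0:ℝ) < 1 - x := by linarith [hx.2]
  have e1 : 1 + x / (1 - x) = (1 - x)⁻¹ := by field_simp; ring
  have e2 : (x / (1 - x)) ^ (a - 1) = x ^ (a - 1) * ((1 - x) ^ (a - 1))⁻¹ := by
    rw [Real.div_rpow hx0.le hx1.le, div_eq_mul_inv]
  have e3 : ((1 - x)⁻¹) ^ (-(a + b)) = (1 - x) ^ (a + b) := by
    rw [Real.inv_rpow hx1.le, Real.rpow_neg hx1.le, inv_inv]
  have e4 : (1 - x) ^ (a + b) * ((1 - x) ^ (a - 1))⁻¹ * (((1 - x) ^ 2 : ℝ))⁻¹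
      = (1 - x) ^ (b - 1) := by
    rw [← Real.rpow_natCast (1 - x) 2, ← Real.rpow_neg hx1.le, ← Real.rpow_neg hx1.le,
      ← Real.rpow_add hx1, ← Real.rpow_add hx1]
    congr 1
    push_cast
    ring
  simp only [smul_eq_mul, e1, e2, e3]
  rw [abs_of_nonneg (by positivity)]
  calc (((1 - x) ^ 2 : ℝ))⁻¹ * (x ^ (a - 1) * ((1 - x) ^ (a - 1))⁻¹ * (1 - x) ^ (a + b))
      = x ^ (a - 1) * ((1 - x) ^ (a + b) * ((1 - x) ^ (a - 1))⁻¹ * (((1 - x) ^ 2 : ℝ))⁻¹) := by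
        ring
    _ = x ^ (a - 1) * (1 - x) ^ (b - 1) := by rw [e4]

open Real Set in
lemma radial_integral (n : ℕ) (hn : 5 ≤ n) :
    ∫ r in Ioi (0:ℝ), r ^ (n - 1) * (1 + r ^ 2) ^ (-(n:ℝ))
      = Real.Gamma ((n:ℝ)/2) ^ 2 / (2 * Real.Gamma (n:ℝ)) := by
  have hn0 : (0:ℝ) < (n:ℝ) := by positivity
  have hg : 0 < Real.Gamma (n:ℝ) := Real.Gamma_pos_of_pos hn0
  set g : ℝ → ℝ := fun u => u ^ ((n:ℝ)/2 - 1) * (1 + u) ^ (-(n:ℝ)) with hgdef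
  have key := integral_comp_rpow_Ioi_of_pos (g := g) (p := 2) two_pos
  have lhs_eq : (∫ x in Ioi (0:ℝ), (2 * x ^ ((2:ℝ) - 1)) • g (x ^ (2:ℝ)))
      = 2 * ∫ r in Ioi (0:ℝ), r ^ (n - 1) * (1 + r ^ 2) ^ (-(n:ℝ)) := by
    rw [← integral_const_mul]
    refine setIntegral_congr_fun measurableSet_Ioi fun x hx => ?_
    have hx0 : (0:ℝ) < x := hx
    have h2 : x ^ (2:ℝ) = x ^ 2 := by rw [← Real.rpow_natCast x 2]; norm_num
    have h3 : (x ^ 2 : ℝ) ^ ((n:ℝ)/2 - 1) = x ^ ((n:ℝ) - 2) := by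
      rw [← h2, ← Real.rpow_mul hx0.le]
      congr 1; ring
    have h4 : x * x ^ ((n:ℝ) - 2) = x ^ (n - 1) := by
      rw [← Real.rpow_natCast x (n-1),
        show ((n - 1 : ℕ) : ℝ) = ((n:ℝ) - 2) + 1 by
          push_cast [Nat.cast_sub (by omega : 1 ≤ n)]; ring,
        Real.rpow_add_one hx0.ne']
      ring
    simp only [hgdef, smul_eq_mul, h2, h3]
    norm_num [Real.rpow_one]
    rw [← h4]
    ring
  have rhs_eq : (∫ u in Ioi (0:ℝ), g u)
      = Real.Gamma ((n:ℝ)/2) ^ 2 / Real.Gamma (n:ℝ) := by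
    have hhalf : (0:ℝ) < (n:ℝ)/2 := by positivity
    have e : ∀ u : ℝ, g u = u ^ ((n:ℝ)/2 - 1) * (1 + u) ^ (-((n:ℝ)/2 + (n:ℝ)/2)) := by
      intro u; simp only [hgdef]; ring_nf
    simp only [e]
    rw [beta_Ioi hhalf hhalf, ← integral_Ioc_eq_integral_Ioo,
      ← intervalIntegral.integral_of_le zero_le_one, real_beta hhalf hhalf]
    ring_nf
  rw [lhs_eq, rhs_eq] at key
  field_simp at key ⊢
  linarith

open Real Set in
lemma full_integral (n : ℕ) (hn : 5 ≤ n) :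
    ∫ y : EuclideanSpace ℝ (Fin n), (1 + ‖y‖ ^ 2) ^ (-(n:ℝ))
      = Real.pi ^ ((n:ℝ)/2) * Real.Gamma ((n:ℝ)/2) / Real.Gamma (n:ℝ) := by
  haveI : Nonempty (Fin n) := ⟨⟨0, by omega⟩⟩
  have hn0 : (0:ℝ) < (n:ℝ) := by positivity
  have hgh : 0 < Real.Gamma ((n:ℝ)/2) := Real.Gamma_pos_of_pos (by positivity)
  have hg : 0 < Real.Gamma (n:ℝ) := Real.Gamma_pos_of_pos hn0
  have hdim : Module.finrank ℝ (EuclideanSpace ℝ (Fin n)) = n := finrank_euclideanSpace_fin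
  have key := integral_fun_norm_addHaar (volume : Measure (EuclideanSpace ℝ (Fin n)))
    (fun r : ℝ => (1 + r ^ 2) ^ (-(n:ℝ)))
  rw [hdim] at key
  rw [key]
  have hball : ((volume : Measure (EuclideanSpace ℝ (Fin n))) (Metric.ball 0 1)).toReal
      = Real.pi ^ ((n:ℝ)/2) / Real.Gamma ((n:ℝ)/2 + 1) := by
    rw [EuclideanSpace.volume_ball]
    simp only [Fintype.card_fin, ENNReal.ofReal_one, one_pow, one_mul]
    rw [ENNReal.toReal_ofReal (by positivity)]
    have : (Real.sqrt Real.pi) ^ n = Real.pi ^ ((n:ℝ)/2) := by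
      rw [Real.sqrt_eq_rpow, ← Real.rpow_natCast (Real.pi ^ ((1:ℝ)/2)) n,
        ← Real.rpow_mul Real.pi_nonneg]
      congr 1; ring
    rw [this]
  have hint : (∫ y in Ioi (0:ℝ), y ^ (n - 1) • (1 + y ^ 2) ^ (-(n:ℝ)))
      = Real.Gamma ((n:ℝ)/2) ^ 2 / (2 * Real.Gamma (n:ℝ)) := by
    simpa only [smul_eq_mul] using radial_integral n hn
  rw [measureReal_def, hball, hint, nsmul_eq_mul, smul_eq_mul,
    Real.Gamma_add_one (by positivity : ((n:ℝ)/2) ≠ 0)]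
  field_simp

/- For `n ≥ 5`, `x ∈ ℝⁿ` and `λ > 0`,
`∫_{ℝⁿ} U_{x,λ}^{2n/(n−4)} = 𝒮₂^{n/4}` with
`𝒮₂ = π² n(n−4)(n²−4) Γ(n/2)^{4/n} Γ(n)^{−4/n}`. -/
open Real Set in
theorem bubble_critical_integral (n : ℕ) (hn : 5 ≤ n)
    (x : EuclideanSpace ℝ (Fin n)) (lam : ℝ) (hlam : 0 < lam) :
    ∫ y : EuclideanSpace ℝ (Fin n), bubble n x lam y ^ (2 * (n : ℝ) / ((n : ℝ) - 4)) =
      (Real.pi ^ 2 * (n : ℝ) * ((n : ℝ) - 4) * ((n : ℝ) ^ 2 - 4) *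
          Real.Gamma ((n : ℝ) / 2) ^ ((4 : ℝ) / (n : ℝ)) *
          Real.Gamma (n : ℝ) ^ (-(4 : ℝ) / (n : ℝ))) ^ ((n : ℝ) / 4) := by
  have hn5 : (5:ℝ) ≤ (n:ℝ) := by exact_mod_cast hn
  have hn4 : (0:ℝ) < (n:ℝ) - 4 := by linarith
  have hn0 : (0:ℝ) < (n:ℝ) := by linarith
  have hgh : 0 < Real.Gamma ((n:ℝ)/2) := Real.Gamma_pos_of_pos (by positivity)
  have hg : 0 < Real.Gamma (n:ℝ) := Real.Gamma_pos_of_pos hn0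
  set p : ℝ := 2 * (n:ℝ) / ((n:ℝ) - 4) with hp
  set M : ℝ := ((n:ℝ) - 4) * ((n:ℝ) - 2) * (n:ℝ) * ((n:ℝ) + 2) with hM
  have hMpos : 0 < M := by
    apply mul_pos (mul_pos (mul_pos hn4 (by linarith)) hn0) (by linarith)
  set c : ℝ := M ^ (((n:ℝ) - 4) / 8) with hc
  have hcpos : 0 < c := Real.rpow_pos_of_pos hMpos _
  -- Step 1: pointwise simplification
  have step1 : ∀ y : EuclideanSpace ℝ (Fin n),
      bubble n x lam y ^ p = c ^ p * (lam / (1 + lam ^ 2 * ‖y - x‖ ^ 2)) ^ (n:ℝ) := by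
    intro y
    have ht : 0 < lam / (1 + lam ^ 2 * ‖y - x‖ ^ 2) := div_pos hlam (by positivity)
    rw [bubble, Real.mul_rpow hcpos.le (Real.rpow_nonneg ht.le _),
      ← Real.rpow_mul ht.le,
      show ((n:ℝ) - 4) / 2 * p = (n:ℝ) by
        rw [hp, div_mul_div_comm, div_eq_iff (by positivity)]; ring]
  simp_rw [step1, integral_const_mul]
  -- Step 2: translation invariance
  have step2 : (∫ y : EuclideanSpace ℝ (Fin n),
        (lam / (1 + lam ^ 2 * ‖y - x‖ ^ 2)) ^ (n:ℝ))
      = ∫ y : EuclideanSpace ℝ (Fin n), (lam / (1 + lam ^ 2 * ‖y‖ ^ 2)) ^ (n:ℝ) :=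
    integral_sub_right_eq_self (fun y => (lam / (1 + lam ^ 2 * ‖y‖ ^ 2)) ^ (n:ℝ)) x
  rw [step2]
  -- Step 3: scaling
  have step3 : (∫ y : EuclideanSpace ℝ (Fin n),
        (lam / (1 + lam ^ 2 * ‖y‖ ^ 2)) ^ (n:ℝ))
      = ((lam ^ n)⁻¹ : ℝ) • ∫ z : EuclideanSpace ℝ (Fin n),
          (lam / (1 + ‖z‖ ^ 2)) ^ (n:ℝ) := by
    have h := MeasureTheory.Measure.integral_comp_smul_of_nonneg (μ := volume)
      (fun z : EuclideanSpace ℝ (Fin n) => (lam / (1 + ‖z‖ ^ 2)) ^ (n:ℝ)) lam (hR := hlam.le)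
    rw [finrank_euclideanSpace_fin] at h
    rw [← h]
    congr 1
    ext y
    congr 3
    rw [norm_smul, mul_pow, Real.norm_eq_abs, sq_abs]
  rw [step3]
  -- Step 4: evaluate the integral
  have step4 : (∫ z : EuclideanSpace ℝ (Fin n), (lam / (1 + ‖z‖ ^ 2)) ^ (n:ℝ))
      = lam ^ n * (Real.pi ^ ((n:ℝ)/2) * Real.Gamma ((n:ℝ)/2) / Real.Gamma (n:ℝ)) := by
    rw [← full_integral n hn, ← integral_const_mul]
    congr 1
    ext z
    rw [Real.div_rpow hlam.le (by positivity), Real.rpow_neg (by positivity),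
      Real.rpow_natCast, div_eq_mul_inv]
  rw [step4, smul_eq_mul]
  have hlamn : (lam:ℝ) ^ n ≠ 0 := by positivity
  rw [show ((lam ^ n)⁻¹ * (lam ^ n * (Real.pi ^ ((n:ℝ)/2) * Real.Gamma ((n:ℝ)/2)
      / Real.Gamma (n:ℝ)))) = Real.pi ^ ((n:ℝ)/2) * Real.Gamma ((n:ℝ)/2) / Real.Gamma (n:ℝ) by
    field_simp]
  -- Step 5: final algebra
  have hcp : c ^ p = M ^ ((n:ℝ)/4) := by
    rw [hc, ← Real.rpow_mul hMpos.le]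
    congr 1
    rw [hp, div_mul_div_comm, div_eq_div_iff (by positivity) (by norm_num : (4:ℝ) ≠ 0)]
    ring
  rw [hcp]
  have hpi2 : (0:ℝ) ≤ Real.pi ^ 2 := by positivity
  have hA1 : (0:ℝ) ≤ Real.pi ^ 2 * (n:ℝ) := mul_nonneg hpi2 hn0.le
  have hA2 : (0:ℝ) ≤ Real.pi ^ 2 * (n:ℝ) * ((n:ℝ) - 4) := mul_nonneg hA1 hn4.le
  have hsq : (0:ℝ) ≤ (n:ℝ) ^ 2 - 4 := by nlinarith
  have hA3 : (0:ℝ) ≤ Real.pi ^ 2 * (n:ℝ) * ((n:ℝ) - 4) * ((n:ℝ) ^ 2 - 4) :=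
    mul_nonneg hA2 hsq
  have hA4 : (0:ℝ) ≤ Real.pi ^ 2 * (n:ℝ) * ((n:ℝ) - 4) * ((n:ℝ) ^ 2 - 4) *
      Real.Gamma ((n:ℝ)/2) ^ ((4:ℝ)/(n:ℝ)) := mul_nonneg hA3 (Real.rpow_nonneg hgh.le _)
  rw [Real.mul_rpow hA4 (Real.rpow_nonneg hg.le _),
    Real.mul_rpow hA3 (Real.rpow_nonneg hgh.le _),
    Real.mul_rpow hA2 hsq,
    Real.mul_rpow hA1 hn4.le,
    Real.mul_rpow hpi2 hn0.le,
    ← Real.rpow_natCast Real.pi 2, ← Real.rpow_mul Real.pi_nonneg,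
    ← Real.rpow_mul hgh.le, ← Real.rpow_mul hg.le]
  rw [show (4:ℝ)/(n:ℝ) * ((n:ℝ)/4) = 1 by field_simp <;> ring,
    show -(4:ℝ)/(n:ℝ) * ((n:ℝ)/4) = -1 by field_simp <;> ring,
    Real.rpow_one, Real.rpow_neg_one]
  rw [show ((2:ℕ):ℝ) * ((n:ℝ)/4) = (n:ℝ)/2 by push_cast; ring]
  have hMsplit : M ^ ((n:ℝ)/4)
      = (n:ℝ) ^ ((n:ℝ)/4) * ((n:ℝ) - 4) ^ ((n:ℝ)/4) * ((n:ℝ)^2 - 4) ^ ((n:ℝ)/4) := by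
    rw [← Real.mul_rpow hn0.le hn4.le, ← Real.mul_rpow (mul_nonneg hn0.le hn4.le) hsq]
    congr 1
    rw [hM]; ring
  rw [hMsplit]
  field_simp
end
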